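/- Let 0 < b < Λ and suppose (μ/σ)·(T_max/T_min)^{σ−1}·(Λ+b)/(Λ−b) < 1. Then there exists a constant K > 0, depending only on v, μ, σ, F, T_min, T_max, Λ, b and Φ (and in particular not on λ₀ ∈ L¹_Λ(Ω)), such that for every λ ∈ L¹(Ω) with ‖λ − λ₀‖_{L¹} ≤ b one has ‖Ψ[λ]‖_{L¹} ≤ K; one may take K = v·ω_U·(Λ+b)·(1 + (Λ+b)/Λ), where ω_U := w_U·G_L^{−μ}, G_L := F^{1/(σ−1)} T_min (Λ+b)^{1/(1−σ)}, and w_U := [(μ/σ)(T_max/T_min)^{σ−1} Φ/(Λ−b)] / [1 − (μ/σ)(T_max/T_min)^{σ−1}(Λ+b)/(Λ−b)]. -/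

import Mathlib

set_option maxHeartbeats 1000000


open MeasureTheory Real Set

/-- The price index operator `G[λ](x) = [(1/F) ∫_Ω |λ(y)| T(x,y)^{1-σ} dy]^{1/(1-σ)}`. -/
noncomputable def priceIndex {n : ℕ} (Ω : Set (Fin n → ℝ)) (F σ : ℝ)
    (T : (Fin n → ℝ) → (Fin n → ℝ) → ℝ) (lam : (Fin n → ℝ) → ℝ)
    (x : Fin n → ℝ) : ℝ :=
  ((1 / F) * ∫ y in Ω, |lam y| * T x y ^ (1 - σ)) ^ (1 / (1 - σ))

/-- `W` is a nonnegative continuous solution on `Ω` of the wage fixed-point equation for `lam`. -/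
def IsWageSolution {n : ℕ} (Ω : Set (Fin n → ℝ)) (F σ μ : ℝ)
    (T : (Fin n → ℝ) → (Fin n → ℝ) → ℝ) (φ lam W : (Fin n → ℝ) → ℝ) : Prop :=
  ContinuousOn W Ω ∧ (∀ x ∈ Ω, 0 ≤ W x) ∧
  ∀ x ∈ Ω, W x = (μ / (σ * F)) *
    ∫ y in Ω, (W y * |lam y| + φ y) * priceIndex Ω F σ T lam y ^ (σ - 1) * T x y ^ (1 - σ)

/-- The real wage `ω[λ] = w[λ]·G[λ]^{−μ}` built from a wage solution `W` for `lam`. -/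
noncomputable def omegaOf {n : ℕ} (Ω : Set (Fin n → ℝ)) (F σ μ : ℝ)
    (T : (Fin n → ℝ) → (Fin n → ℝ) → ℝ) (lam W : (Fin n → ℝ) → ℝ)
    (x : Fin n → ℝ) : ℝ :=
  W x * priceIndex Ω F σ T lam x ^ (-μ)

/-- The right-hand side `Ψ[λ] = v(ω[λ] − ω̃[λ])λ` of the migration dynamics,
built from a wage solution `W` for `lam`. -/
noncomputable def psiOf {n : ℕ} (Ω : Set (Fin n → ℝ)) (F σ μ Λ v : ℝ)
    (T : (Fin n → ℝ) → (Fin n → ℝ) → ℝ) (lam W : (Fin n → ℝ) → ℝ)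
    (x : Fin n → ℝ) : ℝ :=
  v * (omegaOf Ω F σ μ T lam W x -
    (1 / Λ) * ∫ y in Ω, omegaOf Ω F σ μ T lam W y * lam y) * lam x

theorem psi_bounded {n : ℕ} (Ω : Set (Fin n → ℝ))
    (hΩc : IsCompact Ω) (hΩpos : 0 < volume Ω)
    (T : (Fin n → ℝ) → (Fin n → ℝ) → ℝ)
    (hTcont : ContinuousOn (fun p : (Fin n → ℝ) × (Fin n → ℝ) => T p.1 p.2) (Ω ×ˢ Ω))
    (Tmin Tmax : ℝ) (hTmin : 1 ≤ Tmin)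
    (hT : ∀ x ∈ Ω, ∀ y ∈ Ω, T x y ∈ Icc Tmin Tmax)
    (σ μ F v Λ Φ : ℝ) (hσ : 1 < σ) (hμ : μ ∈ Ioo (0 : ℝ) 1) (hF : 0 < F)
    (hv : 0 < v) (hΛ : 0 < Λ) (hΦ : 0 < Φ)
    (φ : (Fin n → ℝ) → ℝ) (hφint : IntegrableOn φ Ω)
    (hφ0 : ∀ᵐ x ∂(volume.restrict Ω), 0 ≤ φ x) (hφΦ : (∫ x in Ω, φ x) = Φ)
    (b : ℝ) (hb : 0 < b) (hbΛ : b < Λ)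
    (hcond : μ / σ * (Tmax / Tmin) ^ (σ - 1) * ((Λ + b) / (Λ - b)) < 1)
    (wU Glow ωU K : ℝ)
    (hwU : wU = (μ / σ * (Tmax / Tmin) ^ (σ - 1) * (Φ / (Λ - b))) /
      (1 - μ / σ * (Tmax / Tmin) ^ (σ - 1) * ((Λ + b) / (Λ - b))))
    (hGL : Glow = F ^ (1 / (σ - 1)) * Tmin * (Λ + b) ^ (1 / (1 - σ)))
    (hωU : ωU = wU * Glow ^ (-μ))
    (hK : K = v * ωU * (Λ + b) * (1 + (Λ + b) / Λ)) :
    0 < K ∧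
    ∀ lam₀ : (Fin n → ℝ) → ℝ, IntegrableOn lam₀ Ω →
      (∀ᵐ x ∂(volume.restrict Ω), 0 ≤ lam₀ x) → (∫ x in Ω, lam₀ x) = Λ →
      ∀ lam : (Fin n → ℝ) → ℝ, IntegrableOn lam Ω →
        (∫ x in Ω, |lam x - lam₀ x|) ≤ b →
        ∀ W : (Fin n → ℝ) → ℝ, IsWageSolution Ω F σ μ T φ lam W →
          (∫ x in Ω, |psiOf Ω F σ μ Λ v T lam W x|) ≤ K := by
  obtain ⟨hμ0, hμ1⟩ := hμ
  have hΩne : Ω.Nonempty := nonempty_of_measure_ne_zero hΩpos.ne'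
  obtain ⟨z0, hz0⟩ := hΩne
  have hΩm : MeasurableSet Ω := hΩc.measurableSet
  have hσ0 : (0:ℝ) < σ := lt_trans one_pos hσ
  have hσ1 : (0:ℝ) < σ - 1 := by linarith
  have hσ2 : 1 - σ < 0 := by linarith
  have hσ2' : 1 - σ ≠ 0 := ne_of_lt hσ2
  have hTminpos : (0:ℝ) < Tmin := lt_of_lt_of_le one_pos hTmin
  have hTmaxpos : (0:ℝ) < Tmax :=
    lt_of_lt_of_le hTminpos ((hT z0 hz0 z0 hz0).1.trans (hT z0 hz0 z0 hz0).2)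
  have hΛb : (0:ℝ) < Λ - b := by linarith
  have hΛb' : (0:ℝ) < Λ + b := by linarith
  have he : 1/(1-σ) < 0 := div_neg_of_pos_of_neg one_pos hσ2
  set R : ℝ := (Tmax / Tmin) ^ (σ - 1) with hR
  have hRpos : 0 < R := rpow_pos_of_pos (div_pos hTmaxpos hTminpos) _
  set a : ℝ := μ / σ * R * ((Λ + b) / (Λ - b)) with ha
  have ha0 : 0 < a := by positivity
  have hwU0 : 0 < wU := by
    rw [hwU]
    exact div_pos (by positivity) (by linarith)
  have hGlowpos : 0 < Glow := by
    rw [hGL]; positivity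
  have hωU0 : 0 < ωU := by
    rw [hωU]; positivity
  have hK0 : 0 < K := by rw [hK]; positivity
  refine ⟨hK0, ?_⟩
  intro lam₀ hl0int hl00 hl0Λ lam hlint hldiff W hW
  obtain ⟨hWc, hW0, hWeq⟩ := hW
  -- abbreviations and basic rpow identities
  have hTmin1σ : Tmin ^ (1-σ) = (Tmin ^ (σ-1))⁻¹ := by
    rw [show (1-σ) = -(σ-1) by ring, Real.rpow_neg hTminpos.le]
  have hTmax1σ : Tmax ^ (1-σ) = (Tmax ^ (σ-1))⁻¹ := by
    rw [show (1-σ) = -(σ-1) by ring, Real.rpow_neg hTmaxpos.le]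
  have hR_eq : R = Tmax ^ (σ-1) * Tmin ^ (1-σ) := by
    rw [hR, Real.div_rpow hTmaxpos.le hTminpos.le, hTmin1σ, div_eq_mul_inv]
  -- L¹ bounds on lam
  set I : ℝ := ∫ x in Ω, |lam x| with hIdef
  have hlabs : IntegrableOn (fun x => |lam x|) Ω := hlint.abs
  have hdint : IntegrableOn (fun x => |lam x - lam₀ x|) Ω := (hlint.sub hl0int).abs
  have hl0abs : (∫ x in Ω, |lam₀ x|) = Λ := by
    rw [← hl0Λ]
    refine integral_congr_ae ?_
    filter_upwards [hl00] with x hx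
    exact abs_of_nonneg hx
  have hIub : I ≤ Λ + b := by
    have h1 : I ≤ ∫ x in Ω, (|lam x - lam₀ x| + |lam₀ x|) := by
      refine integral_mono_ae hlabs (hdint.add hl0int.abs)
        (Filter.Eventually.of_forall fun x => ?_)
      calc |lam x| = |lam x - lam₀ x + lam₀ x| := by ring_nf
        _ ≤ |lam x - lam₀ x| + |lam₀ x| := abs_add_le _ _
    rw [integral_add hdint hl0int.abs, hl0abs] at h1
    linarith
  have hIlb : Λ - b ≤ I := by
    have h1 : (∫ x in Ω, |lam₀ x|) ≤ ∫ x in Ω, (|lam x - lam₀ x| + |lam x|) := by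
      refine integral_mono_ae hl0int.abs (hdint.add hlabs)
        (Filter.Eventually.of_forall fun x => ?_)
      calc |lam₀ x| = |lam x - lam₀ x - lam x| := by
              rw [show lam x - lam₀ x - lam x = -lam₀ x by ring, abs_neg]
        _ ≤ |lam x - lam₀ x| + |lam x| := abs_sub _ _
    rw [integral_add hdint hlabs, hl0abs] at h1
    linarith
  have hI0 : 0 < I := lt_of_lt_of_le hΛb hIlb
  -- positivity of transport costs
  have hTpos : ∀ x ∈ Ω, ∀ y ∈ Ω, 0 < T x y := fun x hx y hy =>
    lt_of_lt_of_le (lt_of_lt_of_le one_pos hTmin) (hT x hx y hy).1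
  -- bounds on the inner integral of the price index
  have hJint : ∀ x ∈ Ω, IntegrableOn (fun y => |lam y| * T x y ^ (1 - σ)) Ω := by
    intro x hx
    have h1 : ContinuousOn (fun y => T x y) Ω :=
      hTcont.comp ((continuous_const.prodMk continuous_id).continuousOn)
        (fun y hy => ⟨hx, hy⟩)
    have hcont : ContinuousOn (fun y => T x y ^ (1 - σ)) Ω :=
      h1.rpow_const (fun y hy => Or.inl (hTpos x hx y hy).ne')
    refine (hlabs.const_mul (Tmin ^ (1-σ))).mono'
      (hlabs.aestronglyMeasurable.mul (hcont.aestronglyMeasurable hΩm)) ?_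
    filter_upwards [ae_restrict_mem hΩm] with y hy
    rw [Real.norm_eq_abs, abs_of_nonneg
      (mul_nonneg (abs_nonneg _) (Real.rpow_nonneg (hTpos x hx y hy).le _)),
      mul_comm (Tmin ^ (1-σ))]
    exact mul_le_mul_of_nonneg_left
      (rpow_le_rpow_of_nonpos hTminpos (hT x hx y hy).1 hσ2.le) (abs_nonneg _)
  have hJub : ∀ x ∈ Ω, (∫ y in Ω, |lam y| * T x y ^ (1 - σ)) ≤ Tmin ^ (1 - σ) * (Λ + b) := by
    intro x hx
    have h1 : (∫ y in Ω, |lam y| * T x y ^ (1 - σ)) ≤ ∫ y in Ω, Tmin ^ (1 - σ) * |lam y| := by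
      refine integral_mono_of_nonneg ?_ (hlabs.const_mul _) ?_
      · filter_upwards [ae_restrict_mem hΩm] with y hy
        exact mul_nonneg (abs_nonneg _) (Real.rpow_nonneg (hTpos x hx y hy).le _)
      · filter_upwards [ae_restrict_mem hΩm] with y hy
        rw [mul_comm (Tmin ^ (1-σ))]
        exact mul_le_mul_of_nonneg_left
          (rpow_le_rpow_of_nonpos hTminpos (hT x hx y hy).1 hσ2.le) (abs_nonneg _)
    rw [integral_const_mul] at h1
    exact h1.trans (mul_le_mul_of_nonneg_left hIub (Real.rpow_nonneg hTminpos.le _))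
  have hJlb : ∀ x ∈ Ω, Tmax ^ (1 - σ) * (Λ - b) ≤ ∫ y in Ω, |lam y| * T x y ^ (1 - σ) := by
    intro x hx
    have h1 : (∫ y in Ω, Tmax ^ (1 - σ) * |lam y|) ≤ ∫ y in Ω, |lam y| * T x y ^ (1 - σ) := by
      refine integral_mono_ae (hlabs.const_mul _) (hJint x hx) ?_
      filter_upwards [ae_restrict_mem hΩm] with y hy
      rw [mul_comm]
      exact mul_le_mul_of_nonneg_left
        (rpow_le_rpow_of_nonpos (hTpos x hx y hy) (hT x hx y hy).2 hσ2.le) (abs_nonneg _)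
    rw [integral_const_mul] at h1
    exact le_trans (mul_le_mul_of_nonneg_left hIlb (Real.rpow_nonneg hTmaxpos.le _)) h1
  have hGpos_base : ∀ x ∈ Ω, 0 < (1/F) * ∫ y in Ω, |lam y| * T x y ^ (1 - σ) := by
    intro x hx
    refine mul_pos (by positivity) (lt_of_lt_of_le ?_ (hJlb x hx))
    exact mul_pos (rpow_pos_of_pos hTmaxpos _) hΛb
  have hGpos : ∀ x ∈ Ω, 0 < priceIndex Ω F σ T lam x := fun x hx =>
    rpow_pos_of_pos (hGpos_base x hx) _
  -- lower bound on the price index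
  have hGlow_eq : Glow = ((1/F) * (Tmin ^ (1-σ) * (Λ + b))) ^ (1/(1-σ)) := by
    have h1 : ((1:ℝ)/F) ^ (1/(1-σ)) = F ^ (1/(σ-1)) := by
      rw [one_div, ← Real.rpow_neg_one F, ← Real.rpow_mul hF.le]
      congr 1
      rw [show σ - 1 = -(1-σ) by ring, div_neg]
      ring
    have h2 : (Tmin ^ (1-σ)) ^ (1/(1-σ)) = Tmin := by
      rw [← Real.rpow_mul hTminpos.le, mul_one_div, div_self hσ2', Real.rpow_one]
    rw [Real.mul_rpow (by positivity) (by positivity),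
      Real.mul_rpow (Real.rpow_nonneg hTminpos.le _) hΛb'.le, h1, h2, hGL, mul_assoc]
  have hGlb : ∀ x ∈ Ω, Glow ≤ priceIndex Ω F σ T lam x := by
    intro x hx
    rw [hGlow_eq]
    unfold priceIndex
    exact rpow_le_rpow_of_nonpos (hGpos_base x hx)
      (mul_le_mul_of_nonneg_left (hJub x hx) (by positivity)) he.le
  -- upper bound on priceIndex ^ (σ-1)
  have hGub : ∀ x ∈ Ω, priceIndex Ω F σ T lam x ^ (σ - 1) ≤ F * Tmax ^ (σ-1) / (Λ - b) := by
    intro x hx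
    have hbase := hGpos_base x hx
    have h1 : priceIndex Ω F σ T lam x ^ (σ-1)
        = ((1/F) * ∫ y in Ω, |lam y| * T x y ^ (1-σ))⁻¹ := by
      unfold priceIndex
      rw [← Real.rpow_mul hbase.le,
        show (1/(1-σ))*(σ-1) = -1 by rw [div_mul_eq_mul_div, one_mul, div_eq_iff hσ2']; ring,
        Real.rpow_neg_one]
    have h2 : (1/F) * (Tmax ^ (1-σ) * (Λ-b)) ≤ (1/F) * ∫ y in Ω, |lam y| * T x y ^ (1-σ) :=
      mul_le_mul_of_nonneg_left (hJlb x hx) (by positivity)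
    have hpos2 : 0 < (1/F) * (Tmax ^ (1-σ) * (Λ-b)) := by
      have := rpow_pos_of_pos hTmaxpos (1-σ); positivity
    have h3 := inv_anti₀ hpos2 h2
    have h4 : ((1/F) * (Tmax ^ (1-σ) * (Λ-b)))⁻¹ = F * Tmax ^ (σ-1) / (Λ-b) := by
      rw [hTmax1σ]
      have hne : Tmax ^ (σ-1) ≠ 0 := (rpow_pos_of_pos hTmaxpos _).ne'
      field_simp
    rw [h1, ← h4]
    exact h3
  -- maximum of the wage
  obtain ⟨x₀, hx₀, hmax⟩ := hΩc.exists_isMaxOn ⟨z0, hz0⟩ hWc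
  set M : ℝ := W x₀ with hM
  have hM0 : 0 ≤ M := hW0 x₀ hx₀
  have hWle : ∀ x ∈ Ω, W x ≤ M := fun x hx => hmax hx
  set c2 : ℝ := F * Tmax ^ (σ-1) / (Λ-b) * Tmin ^ (1-σ) with hc2
  have hc2pos : 0 < c2 := by
    have h1 := rpow_pos_of_pos hTmaxpos (σ-1)
    have h2 := rpow_pos_of_pos hTminpos (1-σ)
    positivity
  have hMbound : M ≤ a * M + μ / σ * R * (Φ / (Λ - b)) := by
    have hint : (∫ y in Ω, (W y * |lam y| + φ y) * priceIndex Ω F σ T lam y ^ (σ-1) * T x₀ y ^ (1-σ))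
        ≤ ∫ y in Ω, (M * |lam y| + φ y) * c2 := by
      refine integral_mono_of_nonneg ?_ (((hlabs.const_mul M).add hφint).mul_const _) ?_
      · filter_upwards [ae_restrict_mem hΩm, hφ0] with y hy hφy
        exact mul_nonneg (mul_nonneg
          (add_nonneg (mul_nonneg (hW0 y hy) (abs_nonneg _)) hφy)
          (Real.rpow_nonneg (hGpos y hy).le _)) (Real.rpow_nonneg (hTpos x₀ hx₀ y hy).le _)
      · filter_upwards [ae_restrict_mem hΩm, hφ0] with y hy hφy
        have hA : W y * |lam y| + φ y ≤ M * |lam y| + φ y :=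
          add_le_add_left (mul_le_mul_of_nonneg_right (hWle y hy) (abs_nonneg _)) _
        have hA0 : 0 ≤ M * |lam y| + φ y := add_nonneg (mul_nonneg hM0 (abs_nonneg _)) hφy
        have hB := hGub y hy
        have hB0 : 0 ≤ priceIndex Ω F σ T lam y ^ (σ-1) := Real.rpow_nonneg (hGpos y hy).le _
        have hB'0 : 0 ≤ F * Tmax ^ (σ-1) / (Λ-b) := by
          have := rpow_pos_of_pos hTmaxpos (σ-1); positivity
        have hC : T x₀ y ^ (1-σ) ≤ Tmin ^ (1-σ) :=
          rpow_le_rpow_of_nonpos hTminpos (hT x₀ hx₀ y hy).1 hσ2.le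
        have hC0 : 0 ≤ T x₀ y ^ (1-σ) := Real.rpow_nonneg (hTpos x₀ hx₀ y hy).le _
        calc (W y * |lam y| + φ y) * priceIndex Ω F σ T lam y ^ (σ-1) * T x₀ y ^ (1-σ)
            ≤ (M * |lam y| + φ y) * (F * Tmax ^ (σ-1) / (Λ-b)) * Tmin ^ (1-σ) := by
              refine mul_le_mul (mul_le_mul hA hB hB0 hA0) hC hC0 (mul_nonneg hA0 hB'0)
          _ = (M * |lam y| + φ y) * c2 := by rw [hc2, mul_assoc]
    have h5 : (∫ y in Ω, (M * |lam y| + φ y) * c2) = (M * I + Φ) * c2 := by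
      rw [integral_mul_const, integral_add (hlabs.const_mul M) hφint, integral_const_mul, hφΦ]
    have h7 : (M * I + Φ) * c2 ≤ (M * (Λ + b) + Φ) * c2 := by
      refine mul_le_mul_of_nonneg_right ?_ hc2pos.le
      exact add_le_add_left (mul_le_mul_of_nonneg_left hIub hM0) _
    have hc1c2 : μ/(σ*F) * c2 = μ/σ * R / (Λ-b) := by
      rw [hc2, hR_eq]
      field_simp
    calc M = (μ/(σ*F)) * ∫ y in Ω,
          (W y * |lam y| + φ y) * priceIndex Ω F σ T lam y ^ (σ-1) * T x₀ y ^ (1-σ) :=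
          hWeq x₀ hx₀
      _ ≤ (μ/(σ*F)) * ((M * (Λ + b) + Φ) * c2) := by
          refine mul_le_mul_of_nonneg_left ((hint.trans (le_of_eq h5)).trans h7) (by positivity)
      _ = (μ/(σ*F) * c2) * (M * (Λ + b) + Φ) := by ring
      _ = (μ/σ * R / (Λ-b)) * (M * (Λ + b) + Φ) := by rw [hc1c2]
      _ = a * M + μ / σ * R * (Φ / (Λ - b)) := by
          rw [ha]; field_simp
  have hMwU : M ≤ wU := by
    rw [hwU, le_div_iff₀ (by linarith : (0:ℝ) < 1 - a)]
    nlinarith [hMbound]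
  -- real wage bounds
  have hωle : ∀ x ∈ Ω, omegaOf Ω F σ μ T lam W x ≤ ωU := by
    intro x hx
    rw [hωU]
    unfold omegaOf
    refine mul_le_mul ((hWle x hx).trans hMwU)
      (rpow_le_rpow_of_nonpos hGlowpos (hGlb x hx) (by linarith : -μ ≤ 0))
      (Real.rpow_nonneg (hGpos x hx).le _) hwU0.le
  have hω0 : ∀ x ∈ Ω, 0 ≤ omegaOf Ω F σ μ T lam W x := fun x hx =>
    mul_nonneg (hW0 x hx) (Real.rpow_nonneg (hGpos x hx).le _)
  -- bound on the average real wage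
  have htil : |(1/Λ) * ∫ y in Ω, omegaOf Ω F σ μ T lam W y * lam y| ≤ ωU * (Λ + b) / Λ := by
    rw [abs_mul, abs_of_nonneg (by positivity : (0:ℝ) ≤ 1/Λ)]
    have h1 : |∫ y in Ω, omegaOf Ω F σ μ T lam W y * lam y|
        ≤ ∫ y in Ω, |omegaOf Ω F σ μ T lam W y * lam y| := by
      simpa only [Real.norm_eq_abs] using norm_integral_le_integral_norm
        (μ := volume.restrict Ω) (fun y => omegaOf Ω F σ μ T lam W y * lam y)
    have h2 : (∫ y in Ω, |omegaOf Ω F σ μ T lam W y * lam y|) ≤ ∫ y in Ω, ωU * |lam y| := by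
      refine integral_mono_of_nonneg (Filter.Eventually.of_forall fun y => abs_nonneg _)
        (hlabs.const_mul _) ?_
      filter_upwards [ae_restrict_mem hΩm] with y hy
      rw [abs_mul]
      refine mul_le_mul_of_nonneg_right ?_ (abs_nonneg _)
      rw [abs_of_nonneg (hω0 y hy)]
      exact hωle y hy
    rw [integral_const_mul] at h2
    calc (1/Λ) * |∫ y in Ω, omegaOf Ω F σ μ T lam W y * lam y|
        ≤ (1/Λ) * (ωU * (Λ+b)) := by
          refine mul_le_mul_of_nonneg_left ?_ (by positivity)
          exact (h1.trans h2).trans (mul_le_mul_of_nonneg_left hIub hωU0.le)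
      _ = ωU * (Λ+b)/Λ := by ring
  -- final bound
  have hfinal : (∫ x in Ω, |psiOf Ω F σ μ Λ v T lam W x|)
      ≤ ∫ x in Ω, (v * (ωU + ωU * (Λ+b)/Λ)) * |lam x| := by
    refine integral_mono_of_nonneg (Filter.Eventually.of_forall fun x => abs_nonneg _)
      (hlabs.const_mul _) ?_
    filter_upwards [ae_restrict_mem hΩm] with x hx
    unfold psiOf
    rw [abs_mul, abs_mul, abs_of_nonneg hv.le, mul_assoc, mul_assoc]
    refine mul_le_mul_of_nonneg_left (mul_le_mul_of_nonneg_right ?_ (abs_nonneg _)) hv.le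
    refine (abs_sub _ _).trans ?_
    refine add_le_add ?_ (htil)
    rw [abs_of_nonneg (hω0 x hx)]
    exact hωle x hx
  rw [integral_const_mul] at hfinal
  calc (∫ x in Ω, |psiOf Ω F σ μ Λ v T lam W x|)
      ≤ v * (ωU + ωU * (Λ+b)/Λ) * I := hfinal
    _ ≤ v * (ωU + ωU * (Λ+b)/Λ) * (Λ+b) := by
        refine mul_le_mul_of_nonneg_left hIub (by positivity)
    _ = K := by rw [hK]; ring
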